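/- arXiv:2010.06798 — 2 statements merged into one kernel-verified Lean document; each statement's English description precedes it below -/
import Mathlib

section
/- Let f : ℝⁿ → ℝ be differentiable with L-Lipschitz gradient and ρ > √2·L. Suppose f is bounded below by M on ℝⁿ. Then the function Φ(x, s) = f(x) + ⟨s − x, ∇f(x)⟩ + (ρ/2)‖x − s‖², evaluated with the dual substitution y = −∇f(x), satisfies Φ(x, s) ≥ M for all x, s ∈ ℝⁿ. -/
/-- Descent lemma: for `f` with `L`-Lipschitz gradient,
`f s ≤ f x + ⟪∇f x, s - x⟫ + L/2 ‖s - x‖²`. -/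
lemma descent_lemma {n : ℕ}
    (f : EuclideanSpace ℝ (Fin n) → ℝ) (hf : Differentiable ℝ f)
    (L : ℝ) (hL : 0 ≤ L)
    (hlip : ∀ x y, ‖gradient f x - gradient f y‖ ≤ L * ‖x - y‖)
    (x s : EuclideanSpace ℝ (Fin n)) :
    f s ≤ f x + (inner ℝ (gradient f x) (s - x) : ℝ) + L / 2 * ‖s - x‖ ^ 2 := by
  set v := s - x with hv
  -- g t = f (x + t • v)
  have hline : ∀ t : ℝ, HasDerivAt (fun t : ℝ => x + t • v) v t := by
    intro t
    simpa using ((hasDerivAt_id t).smul_const v).const_add x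
  have hg : ∀ t : ℝ, HasDerivAt (fun t : ℝ => f (x + t • v))
      ((inner ℝ (gradient f (x + t • v)) v : ℝ)) t := by
    intro t
    have h1 := ((hf (x + t • v)).hasGradientAt).hasFDerivAt.comp_hasDerivAt t (hline t)
    exact h1
  set h : ℝ → ℝ := fun t => f (x + t • v) - t * (inner ℝ (gradient f x) v : ℝ)
      - L * ‖v‖ ^ 2 * t ^ 2 / 2 with hh
  have hdh : ∀ t : ℝ, HasDerivAt h
      ((inner ℝ (gradient f (x + t • v)) v : ℝ) - (inner ℝ (gradient f x) v : ℝ)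
        - L * ‖v‖ ^ 2 * t) t := by
    intro t
    have h2 : HasDerivAt (fun t : ℝ => t * (inner ℝ (gradient f x) v : ℝ))
        (inner ℝ (gradient f x) v : ℝ) t := by
      simpa using (hasDerivAt_id t).mul_const (inner ℝ (gradient f x) v : ℝ)
    have h3 : HasDerivAt (fun t : ℝ => L * ‖v‖ ^ 2 * t ^ 2 / 2)
        (L * ‖v‖ ^ 2 * t) t := by
      have := ((hasDerivAt_pow 2 t).const_mul (L * ‖v‖ ^ 2)).div_const 2
      rw [show L * ‖v‖ ^ 2 * t = L * ‖v‖ ^ 2 * (↑(2:ℕ) * t ^ (2 - 1)) / 2 by push_cast; ring]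
      exact this
    exact ((hg t).sub h2).sub h3
  have hmono : AntitoneOn h (Set.Icc (0:ℝ) 1) := by
    apply antitoneOn_of_deriv_nonpos (convex_Icc (0:ℝ) 1)
    · exact fun t _ => (hdh t).differentiableAt.continuousAt.continuousWithinAt
    · intro t ht
      exact (hdh t).differentiableAt.differentiableWithinAt
    · intro t ht
      rw [interior_Icc] at ht
      rw [(hdh t).deriv]
      have h4 : (inner ℝ (gradient f (x + t • v)) v : ℝ)
          - (inner ℝ (gradient f x) v : ℝ) ≤ L * t * ‖v‖ ^ 2 := by
        rw [← inner_sub_left]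
        calc (inner ℝ (gradient f (x + t • v) - gradient f x) v : ℝ)
            ≤ ‖gradient f (x + t • v) - gradient f x‖ * ‖v‖ :=
              real_inner_le_norm _ _
          _ ≤ (L * ‖(x + t • v) - x‖) * ‖v‖ := by
              gcongr; exact hlip _ _
          _ = L * t * ‖v‖ ^ 2 := by
              rw [add_sub_cancel_left, norm_smul, Real.norm_eq_abs,
                abs_of_pos ht.1]
              ring
      nlinarith [sq_nonneg ‖v‖]
  have key := hmono (Set.left_mem_Icc.mpr zero_le_one)
      (Set.right_mem_Icc.mpr zero_le_one) zero_le_one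
  simp only [hh, zero_smul, add_zero, zero_mul, zero_pow, one_smul, one_mul,
    one_pow, mul_zero, zero_div, sub_zero, mul_one] at key
  have : x + v = s := by rw [hv]; abel
  rw [this] at key
  linarith

/-- abstract Lemma 3: For `f` differentiable with `L`-Lipschitz
gradient, `ρ > √2·L`, and `f` bounded below by `M`, the function
`Φ(x, s) = f(x) + ⟨s − x, ∇f(x)⟩ + (ρ/2)‖x − s‖²` satisfies `Φ(x, s) ≥ M`. -/
theorem augmented_lagrangian_bounded_below {n : ℕ}
    (f : EuclideanSpace ℝ (Fin n) → ℝ) (hf : Differentiable ℝ f)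
    (L : ℝ) (hL : 0 ≤ L)
    (hlip : ∀ x y, ‖gradient f x - gradient f y‖ ≤ L * ‖x - y‖)
    (ρ : ℝ) (hρ : Real.sqrt 2 * L < ρ)
    (M : ℝ) (hM : ∀ x, M ≤ f x)
    (Φ : EuclideanSpace ℝ (Fin n) → EuclideanSpace ℝ (Fin n) → ℝ)
    (hΦ : ∀ x s, Φ x s = f x + (inner ℝ (s - x) (gradient f x) : ℝ) + ρ / 2 * ‖x - s‖ ^ 2) :
    ∀ x s, M ≤ Φ x s := by
  intro x s
  have hdesc := descent_lemma f hf L hL hlip x s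
  have hsym : (inner ℝ (s - x) (gradient f x) : ℝ)
      = (inner ℝ (gradient f x) (s - x) : ℝ) := real_inner_comm _ _
  have hnorm : ‖x - s‖ = ‖s - x‖ := norm_sub_rev _ _
  have hLρ : L ≤ ρ := by
    have h2 : (1:ℝ) ≤ Real.sqrt 2 := by
      rw [show (1:ℝ) = Real.sqrt 1 by simp]
      exact Real.sqrt_le_sqrt (by norm_num)
    nlinarith
  have hMs := hM s
  rw [hΦ, hsym, hnorm]
  nlinarith [sq_nonneg ‖s - x‖]
end

section
/- For Q a positive integer and real α_q ≥ 0, the function (x_1, ..., x_Q) ↦ (1/2)‖r − H∑_{q=1}^Q 2^{q−1}x_q‖² − ∑_{q=1}^Q (α_q/2)‖x_q‖², minimized over x_q ∈ [−1,1]ⁿ for each q, attains its minimum (the feasible set is compact and the function continuous, so a minimizer exists), and if α_q are large enough that the objective is strictly concave in each coordinate direction of each x_q (i.e., α_q > 4^{q−1}·λ_max(HᵀH) for all q), then every minimizer has all coordinates of every x_q in {−1, 1}. -/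
noncomputable def toE {n : ℕ} (v : Fin n → ℝ) : EuclideanSpace ℝ (Fin n) := WithLp.toLp 2 v

noncomputable def lamMax {m n : ℕ} (H : Matrix (Fin m) (Fin n) ℝ) : ℝ :=
  ⨆ i, (show (H.transpose * H).IsHermitian by
    rw [← Matrix.conjTranspose_eq_transpose_of_trivial]
    exact Matrix.isHermitian_conjTranspose_mul_self H).eigenvalues i

lemma normsq_eq {k : ℕ} (v : EuclideanSpace ℝ (Fin k)) : ‖v‖ ^ 2 = ∑ i, (v i) ^ 2 := by
  rw [EuclideanSpace.norm_eq, Real.sq_sqrt (by positivity)]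
  simp [sq_abs]

open Matrix in
lemma diag_le_lamMax {m n : ℕ} (H : Matrix (Fin m) (Fin n) ℝ) (i : Fin n) :
    ∑ k, H k i ^ 2 ≤ lamMax H := by
  have hdiag : (Hᴴ * H) i i = ∑ k, H k i ^ 2 := by
    simp [Matrix.mul_apply, Matrix.conjTranspose_apply, sq]
  rw [← hdiag]
  set hA := Matrix.isHermitian_conjTranspose_mul_self H with hAdef
  set U : Matrix (Fin n) (Fin n) ℝ := (hA.eigenvectorUnitary : Matrix (Fin n) (Fin n) ℝ) with hU
  have hbdd : BddAbove (Set.range hA.eigenvalues) := (Set.finite_range _).bddAbove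
  have hle : ∀ j, hA.eigenvalues j ≤ lamMax H := by
    intro j
    have key : ∀ (A B : Matrix (Fin n) (Fin n) ℝ) (hA' : A.IsHermitian) (hB : B.IsHermitian),
        A = B → hA'.eigenvalues = hB.eigenvalues := by
      intro A B hA' hB h; subst h; rfl
    rw [key _ _ hA (show (H.transpose * H).IsHermitian by
      rw [← Matrix.conjTranspose_eq_transpose_of_trivial]
      exact Matrix.isHermitian_conjTranspose_mul_self H)
      (by rw [Matrix.conjTranspose_eq_transpose_of_trivial])]
    exact le_ciSup (Set.finite_range _).bddAbove j
  have hentry : (Hᴴ * H) i i = ∑ j, hA.eigenvalues j * (U i j) ^ 2 := by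
    conv_lhs => rw [hA.spectral_theorem]
    simp [Matrix.mul_apply, Matrix.diagonal_apply, Matrix.star_apply]
    refine Finset.sum_congr rfl fun j _ => ?_
    rw [hU, hA.eigenvectorUnitary_apply]
    ring_nf
    rw [mul_comm]
    with_unfolding_all rfl
  have hw : ∑ j, (U i j) ^ 2 = 1 := by
    have h1 : (U * star U) i i = 1 := by
      rw [(Matrix.mem_unitaryGroup_iff).mp hA.eigenvectorUnitary.2]
      simp [Matrix.one_apply]
    rw [Matrix.mul_apply] at h1
    rw [← h1]
    refine Finset.sum_congr rfl fun j _ => by simp [Matrix.star_apply]; ring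
  calc (Hᴴ * H) i i = ∑ j, hA.eigenvalues j * (U i j) ^ 2 := hentry
    _ ≤ ∑ j, lamMax H * (U i j) ^ 2 :=
        Finset.sum_le_sum fun j _ => mul_le_mul_of_nonneg_right (hle j) (sq_nonneg _)
    _ = lamMax H := by rw [← Finset.mul_sum, hw, mul_one]


/-- The penalized objective
`(x_1,…,x_Q) ↦ (1/2)‖r − H ∑_q 2^{q−1} x_q‖² − ∑_q (α_q/2)‖x_q‖²`
attains its minimum over the box `([−1,1]ⁿ)^Q`, and if
`α_q > 4^{q−1}·λ_max(HᵀH)` for every `q`, then every minimizer has all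
coordinates of every block in `{−1, 1}`. -/
theorem penalized_objective_minimizers_binary {m n Q : ℕ} (hQ : 0 < Q)
    (H : Matrix (Fin m) (Fin n) ℝ) (r : EuclideanSpace ℝ (Fin m))
    (α : Fin Q → ℝ) (hα0 : ∀ q, 0 ≤ α q)
    (f : (Fin Q → EuclideanSpace ℝ (Fin n)) → ℝ)
    (hf : ∀ xs, f xs = (1 / 2) * ‖r - toE (H.mulVec (fun i => ∑ q : Fin Q, 2 ^ (q : ℕ) * xs q i))‖ ^ 2
        - ∑ q : Fin Q, α q / 2 * ‖xs q‖ ^ 2)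
    (S : Set (Fin Q → EuclideanSpace ℝ (Fin n)))
    (hS : S = {xs | ∀ q i, xs q i ∈ Set.Icc (-1 : ℝ) 1}) :
    (∃ xs ∈ S, ∀ ys ∈ S, f xs ≤ f ys) ∧
    ((∀ q : Fin Q, 4 ^ (q : ℕ) * lamMax H < α q) →
      ∀ xs ∈ S, (∀ ys ∈ S, f xs ≤ f ys) → ∀ q i, xs q i = 1 ∨ xs q i = -1) := by
  -- continuity of f
  have hfc : Continuous f := by
    have hfe : f = fun xs => (1 / 2) * ‖r - toE (H.mulVec (fun i => ∑ q : Fin Q, 2 ^ (q : ℕ) * xs q i))‖ ^ 2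
        - ∑ q : Fin Q, α q / 2 * ‖xs q‖ ^ 2 := funext hf
    rw [hfe]
    apply Continuous.sub
    · apply Continuous.mul continuous_const
      apply Continuous.pow
      apply Continuous.norm
      apply Continuous.sub continuous_const
      refine (PiLp.continuous_toLp 2 (fun _ : Fin m => ℝ)).comp ?_
      apply continuous_pi
      intro k
      show Continuous fun a : Fin Q → EuclideanSpace ℝ (Fin n) =>
        ∑ j, H k j * ∑ p : Fin Q, 2 ^ (p : ℕ) * a p j
      apply continuous_finset_sum
      intro j _
      apply Continuous.mul continuous_const
      apply continuous_finset_sum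
      intro p _
      apply Continuous.mul continuous_const
      exact ((continuous_apply j).comp (PiLp.continuous_ofLp 2 (fun _ : Fin n => ℝ))).comp
        (continuous_apply p)
    · apply continuous_finset_sum
      intro p _
      exact continuous_const.mul (((continuous_apply p).norm).pow 2)
  -- compactness of S
  have hScomp : IsCompact S := by
    have hbox : IsCompact (Set.univ.pi fun _ : Fin n => Set.Icc (-1 : ℝ) 1) :=
      isCompact_univ_pi fun _ => isCompact_Icc
    have hT : IsCompact ((WithLp.equiv 2 (Fin n → ℝ)).symm '' (Set.univ.pi fun _ => Set.Icc (-1 : ℝ) 1)) :=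
      hbox.image (PiLp.continuous_toLp 2 (fun _ : Fin n => ℝ))
    have hSpi : S = Set.univ.pi fun _ : Fin Q =>
        ((WithLp.equiv 2 (Fin n → ℝ)).symm '' (Set.univ.pi fun _ => Set.Icc (-1 : ℝ) 1)) := by
      rw [hS]; ext xs
      simp only [Set.mem_setOf_eq, Set.mem_pi, Set.mem_univ, forall_true_left, Set.mem_image]
      constructor
      · intro h q
        exact ⟨WithLp.equiv 2 _ (xs q), by simpa using h q, by simp⟩
      · rintro h q j
        obtain ⟨w, hw, hwx⟩ := h q
        have : xs q j = w j := by rw [← hwx]; rfl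
        rw [this]
        simpa using hw j
    rw [hSpi]
    exact isCompact_univ_pi fun _ => hT
  have hSne : S.Nonempty := by
    refine ⟨fun _ => toE fun _ => 1, ?_⟩
    rw [hS]; intro q i; exact Set.mem_Icc.mpr ⟨by norm_num [toE], by norm_num [toE]⟩
  have hex : ∃ xs ∈ S, ∀ ys ∈ S, f xs ≤ f ys := by
    obtain ⟨xs, hxs, hmin⟩ := hScomp.exists_isMinOn hSne hfc.continuousOn
    exact ⟨xs, hxs, fun ys hys => hmin hys⟩
  refine ⟨hex, ?_⟩
  intro hgap xs hxs hmin q i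
  rw [hS] at hxs
  set y : ℝ → Fin Q → EuclideanSpace ℝ (Fin n) :=
    fun t p => if p = q then toE (fun j => if j = i then t else xs q j) else xs p with hy
  have hyqj : ∀ (t : ℝ) (j : Fin n), y t q j = if j = i then t else xs q j := by
    intro t j; simp [hy, toE]
  have hypj : ∀ (t : ℝ) (p : Fin Q), p ≠ q → y t p = xs p := by
    intro t p hp; simp [hy, hp]
  have hymem : ∀ t : ℝ, t ∈ Set.Icc (-1:ℝ) 1 → y t ∈ S := by
    intro t ht; rw [hS]; intro p j
    by_cases hp : p = q
    · subst hp; rw [hyqj]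
      by_cases hj : j = i
      · rw [if_pos hj]; exact ht
      · rw [if_neg hj]; exact hxs p j
    · rw [hypj t p hp]; exact hxs p j
  have hyxs : y (xs q i) = xs := by
    funext p
    by_cases hp : p = q
    · subst hp
      ext j
      rw [hyqj]
      by_cases hj : j = i
      · rw [if_pos hj, hj]
      · rw [if_neg hj]
    · exact hypj _ p hp
  obtain ⟨D, hD⟩ : ∃ x : Fin m → ℝ, x = fun k => 2 ^ (q:ℕ) * H k i := ⟨_, rfl⟩
  obtain ⟨W, hW⟩ : ∃ x : Fin m → ℝ, x = fun k => H.mulVec (fun j => ∑ p : Fin Q, 2 ^ (p:ℕ) * y 0 p j) k := ⟨_, rfl⟩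
  obtain ⟨P1, hP1⟩ : ∃ x : ℝ, x = ∑ j ∈ Finset.univ.erase i, (xs q j) ^ 2 := ⟨_, rfl⟩
  obtain ⟨P2, hP2⟩ : ∃ x : ℝ, x = ∑ p ∈ Finset.univ.erase q, α p / 2 * ‖xs p‖ ^ 2 := ⟨_, rfl⟩
  obtain ⟨A, hA⟩ : ∃ x : ℝ, x = (1/2) * (∑ k, D k ^ 2) - α q / 2 := ⟨_, rfl⟩
  obtain ⟨B, hB⟩ : ∃ x : ℝ, x = -∑ k, (r k - W k) * D k := ⟨_, rfl⟩
  obtain ⟨C, hC⟩ : ∃ x : ℝ, x = (1/2) * (∑ k, (r k - W k) ^ 2) - α q / 2 * P1 - P2 := ⟨_, rfl⟩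
  have hmv : ∀ (t : ℝ) (k : Fin m),
      H.mulVec (fun j => ∑ p : Fin Q, 2 ^ (p:ℕ) * y t p j) k = W k + D k * t := by
    intro t k
    have hterm : ∀ j : Fin n, (∑ p : Fin Q, 2 ^ (p:ℕ) * y t p j)
        = (∑ p : Fin Q, 2 ^ (p:ℕ) * y 0 p j) + (if j = i then 2 ^ (q:ℕ) * t else 0) := by
      intro j
      by_cases hj : j = i
      · subst hj
        rw [if_pos rfl]
        have hper : ∀ p : Fin Q, 2 ^ (p:ℕ) * y t p j
            = 2 ^ (p:ℕ) * y 0 p j + (if p = q then 2 ^ (q:ℕ) * t else 0) := by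
          intro p
          by_cases hp : p = q
          · subst hp; rw [hyqj, hyqj, if_pos rfl, if_pos rfl, if_pos rfl]; ring
          · rw [hypj t p hp, hypj 0 p hp, if_neg hp, add_zero]
        rw [Finset.sum_congr rfl fun p _ => hper p, Finset.sum_add_distrib,
          Finset.sum_ite_eq' Finset.univ q (fun _ => 2 ^ (q:ℕ) * t)]
        simp
      · have hsame : ∀ p : Fin Q, y t p j = y 0 p j := by
          intro p; by_cases hp : p = q
          · subst hp; rw [hyqj, hyqj, if_neg hj, if_neg hj]
          · rw [hypj t p hp, hypj 0 p hp]
        rw [if_neg hj, add_zero]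
        exact Finset.sum_congr rfl fun p _ => by rw [hsame p]
    show ∑ j, H k j * (∑ p : Fin Q, 2 ^ (p:ℕ) * y t p j) = W k + D k * t
    rw [Finset.sum_congr rfl fun j _ => by rw [hterm j]]
    simp only [mul_add, Finset.sum_add_distrib, mul_ite, mul_zero]
    rw [Finset.sum_ite_eq' Finset.univ i (fun j => H k j * (2 ^ (q:ℕ) * t))]
    simp only [Finset.mem_univ, if_pos]
    have hWk : (∑ j, H k j * (∑ p : Fin Q, 2 ^ (p:ℕ) * y 0 p j)) = W k := by rw [hW]; rfl
    rw [hWk]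
    simp only [hD]
    ring
  have hnorm : ∀ t : ℝ, ‖r - toE (H.mulVec (fun j => ∑ p : Fin Q, 2 ^ (p:ℕ) * y t p j))‖ ^ 2
      = ∑ k, (r k - W k - D k * t) ^ 2 := by
    intro t
    rw [normsq_eq]
    refine Finset.sum_congr rfl fun k _ => ?_
    have hco : (r - toE (H.mulVec fun j => ∑ p : Fin Q, 2 ^ (p:ℕ) * y t p j)) k
        = r k - (W k + D k * t) := by
      rw [PiLp.sub_apply,
        show (toE (H.mulVec fun j => ∑ p : Fin Q, 2 ^ (p:ℕ) * y t p j)) k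
          = H.mulVec (fun j => ∑ p : Fin Q, 2 ^ (p:ℕ) * y t p j) k from rfl, hmv]
    rw [hco]; ring
  have hpen : ∀ t : ℝ, (∑ p : Fin Q, α p / 2 * ‖y t p‖ ^ 2) = α q / 2 * (t ^ 2 + P1) + P2 := by
    intro t
    rw [← Finset.add_sum_erase _ _ (Finset.mem_univ q)]
    congr 1
    · have hnq : ∑ j, (y t q j) ^ 2 = t ^ 2 + P1 := by
        rw [hP1, ← Finset.add_sum_erase _ _ (Finset.mem_univ i), hyqj, if_pos rfl]
        congr 1
        refine Finset.sum_congr rfl fun j hj => ?_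
        rw [hyqj, if_neg (Finset.ne_of_mem_erase hj)]
      rw [normsq_eq, hnq]
    · rw [hP2]
      refine Finset.sum_congr rfl fun p hp => ?_
      rw [hypj t p (Finset.ne_of_mem_erase hp)]
  have key : ∀ t : ℝ, f (y t) = A * t ^ 2 + B * t + C := by
    intro t
    rw [hf, hnorm, hpen]
    have expand : ∑ k, (r k - W k - D k * t) ^ 2
        = (∑ k, (r k - W k) ^ 2) - 2 * t * (∑ k, (r k - W k) * D k) + t ^ 2 * (∑ k, D k ^ 2) := by
      rw [Finset.mul_sum, Finset.mul_sum, ← Finset.sum_sub_distrib, ← Finset.sum_add_distrib]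
      exact Finset.sum_congr rfl fun k _ => by ring
    rw [expand, hA, hB, hC]
    ring
  have h4 : ((2:ℝ) ^ (q:ℕ)) ^ 2 = 4 ^ (q:ℕ) := by
    rw [← pow_mul, mul_comm, pow_mul]; norm_num
  have hDsum : ∑ k, D k ^ 2 = 4 ^ (q:ℕ) * ∑ k, H k i ^ 2 := by
    rw [Finset.mul_sum]
    refine Finset.sum_congr rfl fun k _ => ?_
    simp only [hD]
    rw [mul_pow, h4]
  have hAneg : A < 0 := by
    have h1 : ∑ k, H k i ^ 2 ≤ lamMax H := diag_le_lamMax H i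
    have h2 : (0:ℝ) < 4 ^ (q:ℕ) := by positivity
    have h3 := hgap q
    rw [hA, hDsum]
    nlinarith [mul_le_mul_of_nonneg_left h1 (le_of_lt h2)]
  obtain ⟨t0, ht0⟩ : ∃ x : ℝ, x = xs q i := ⟨_, rfl⟩
  have ht0mem : t0 ∈ Set.Icc (-1:ℝ) 1 := by rw [ht0]; exact hxs q i
  have hl : -1 ≤ t0 := ht0mem.1
  have hr : t0 ≤ 1 := ht0mem.2
  have e1 : A * t0 ^ 2 + B * t0 + C ≤ A * 1 ^ 2 + B * 1 + C := by
    have h := hmin (y 1) (hymem 1 ⟨by norm_num, le_refl 1⟩)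
    rw [← hyxs, key, key] at h
    rw [ht0]
    exact h
  have e2 : A * t0 ^ 2 + B * t0 + C ≤ A * (-1) ^ 2 + B * (-1) + C := by
    have h := hmin (y (-1)) (hymem (-1) ⟨le_refl _, by norm_num⟩)
    rw [← hyxs, key, key] at h
    rw [ht0]
    exact h
  have hAt : A * t0 ^ 2 ≤ A := by
    have u : (0:ℝ) ≤ (A + B + C) - (A * t0 ^ 2 + B * t0 + C) := by linarith [e1]
    have v : (0:ℝ) ≤ (A - B + C) - (A * t0 ^ 2 + B * t0 + C) := by linarith [e2]
    have hu2 := mul_nonneg (show (0:ℝ) ≤ 1 + t0 by linarith) u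
    have hv2 := mul_nonneg (show (0:ℝ) ≤ 1 - t0 by linarith) v
    nlinarith [hu2, hv2]
  have h1le : (1:ℝ) ≤ t0 ^ 2 := by
    by_contra hcon
    push_neg at hcon
    have := mul_lt_mul_of_neg_left hcon hAneg
    simp only [mul_one] at this
    linarith
  have hfac : (t0 - 1) * (t0 + 1) = 0 := by
    have hp : (0:ℝ) ≤ (1 - t0) * (1 + t0) := mul_nonneg (by linarith) (by linarith)
    have h2 : t0 ^ 2 ≤ 1 := by linarith [hp]
    have hsq : t0 ^ 2 = 1 := le_antisymm h2 h1le
    calc (t0 - 1) * (t0 + 1) = t0 ^ 2 - 1 := by ring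
      _ = 0 := by rw [hsq]; ring
  rcases mul_eq_zero.mp hfac with h | h
  · left; rw [← ht0]; linarith
  · right; rw [← ht0]; linarith
end
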